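/- Let p ∈ {1,2,3}, let k > 0, t > 0 and c₀, c₁, c₂ ≥ 0, and let x ∈ ℝ³. Then the family ω ∈ ℤ^p ↦ exp(−k‖x + ι(ω)‖₂²/(4t))·(c₀ + c₁‖x + ι(ω)‖₂ + c₂‖x + ι(ω)‖₂²) is summable. -/

import Mathlib

/-- For `p ∈ {1,2,3}`, the embedding `ι : ℤ^p → ℝ³` sending `(ω₁,…,ω_p)` to the vector
whose first `p` coordinates are `ω₁,…,ω_p` and whose remaining coordinates are `0`. -/
noncomputable def iotaLat (p : ℕ) (ω : Fin p → ℤ) : EuclideanSpace ℝ (Fin 3) :=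
  (WithLp.equiv 2 (Fin 3 → ℝ)).symm fun i => if h : (i : ℕ) < p then (ω ⟨i, h⟩ : ℝ) else 0

/-- A one-dimensional Gaussian series over `ℤ` is summable. -/
lemma summable_exp_neg_int_sq {c : ℝ} (hc : 0 < c) :
    Summable fun n : ℤ => Real.exp (-c * (n : ℝ) ^ 2) := by
  have hnat : Summable fun n : ℕ => Real.exp (-c * (n : ℝ) ^ 2) := by
    have hgeo : Summable fun n : ℕ => Real.exp (-c) ^ n :=
      summable_geometric_of_lt_one (Real.exp_nonneg _) (by rw [Real.exp_lt_one_iff]; linarith)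
    refine hgeo.of_nonneg_of_le (fun n => (Real.exp_pos _).le) fun n => ?_
    rw [← Real.exp_nat_mul]
    apply Real.exp_le_exp.2
    have : (n : ℝ) ≤ (n : ℝ) ^ 2 := by exact_mod_cast Nat.le_self_pow two_ne_zero n
    nlinarith
  apply Summable.of_nat_of_neg <;> simpa using hnat

/-- Summability of products of a nonnegative summable function over `ℤ^p`. -/
lemma summable_pi_prod {f : ℤ → ℝ} (hf0 : ∀ n, 0 ≤ f n) (hf : Summable f) (p : ℕ) :
    Summable fun ω : Fin p → ℤ => ∏ i, f (ω i) := by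
  induction p with
  | zero => exact .of_finite
  | succ p ih =>
    have hg0 : (0 : (Fin p → ℤ) → ℝ) ≤ fun ω => ∏ i, f (ω i) :=
      fun ω => Finset.prod_nonneg fun i _ => hf0 _
    have key := hf.mul_of_nonneg (g := fun ω : Fin p → ℤ => ∏ i, f (ω i)) ih
      (fun n => hf0 n) hg0
    have h2 := (Fin.consEquiv (fun _ : Fin (p + 1) => ℤ)).symm.summable_iff.2 key
    have h3 : Summable fun ω : Fin (p + 1) → ℤ => f (ω 0) * ∏ i : Fin p, f (ω i.succ) := h2
    simpa [Function.comp, Fin.prod_univ_succ] using h3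

/-- The squared norm of `iotaLat p ω` is the sum of the squares of the coordinates. -/
lemma norm_iotaLat_sq (p : ℕ) (hp : p = 1 ∨ p = 2 ∨ p = 3) (ω : Fin p → ℤ) :
    ‖iotaLat p ω‖ ^ 2 = ∑ i, ((ω i : ℝ)) ^ 2 := by
  have h : ‖iotaLat p ω‖ ^ 2
      = ∑ i : Fin 3, (if h : (i : ℕ) < p then (ω ⟨i, h⟩ : ℝ) else 0) ^ 2 := by
    rw [EuclideanSpace.norm_eq, Real.sq_sqrt (by positivity)]
    simp [iotaLat, Real.norm_eq_abs, sq_abs]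
  rw [h]
  rcases hp with rfl | rfl | rfl <;>
    simp [Fin.sum_univ_three, Fin.sum_univ_succ]

set_option maxHeartbeats 1000000 in
/-- Let `p ∈ {1,2,3}`, `k > 0`, `t > 0`, `c₀, c₁, c₂ ≥ 0` and `x ∈ ℝ³`.
Then the family
`ω ∈ ℤ^p ↦ exp(−k‖x+ι(ω)‖₂²/(4t))·(c₀ + c₁‖x+ι(ω)‖₂ + c₂‖x+ι(ω)‖₂²)` is summable. -/
theorem eisenstein_majorant_summable (p : ℕ) (hp : p = 1 ∨ p = 2 ∨ p = 3)
    (k t c₀ c₁ c₂ : ℝ) (hk : 0 < k) (ht : 0 < t)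
    (h0 : 0 ≤ c₀) (h1 : 0 ≤ c₁) (h2 : 0 ≤ c₂) (x : EuclideanSpace ℝ (Fin 3)) :
    Summable (fun ω : Fin p → ℤ =>
      Real.exp (-k * ‖x + iotaLat p ω‖ ^ 2 / (4 * t)) *
        (c₀ + c₁ * ‖x + iotaLat p ω‖ + c₂ * ‖x + iotaLat p ω‖ ^ 2)) := by
  set b : ℝ := k / (8 * t) with hb
  have hb0 : 0 < b := by positivity
  have hfs : Summable fun n : ℤ => Real.exp (-(b / 2) * (n : ℝ) ^ 2) :=
    summable_exp_neg_int_sq (by positivity)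
  have hprod := summable_pi_prod (fun n => (Real.exp_pos _).le) hfs p
  set A : ℝ := (c₀ + c₁) + (c₁ + c₂) * (8 * t / k) with hA
  have hA0 : 0 ≤ A := by positivity
  refine Summable.of_nonneg_of_le (fun ω => by positivity) (fun ω => ?_)
    (hprod.mul_left (A * Real.exp (b * ‖x‖ ^ 2)))
  set r := ‖x + iotaLat p ω‖ with hr
  have hr0 : 0 ≤ r := norm_nonneg _
  set E := Real.exp (-(b * r ^ 2)) with hE
  have hE0 : 0 < E := Real.exp_pos _
  have hE1 : E ≤ 1 := Real.exp_le_one_iff.2 (by nlinarith)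
  have hEv : E * (b * r ^ 2) ≤ 1 := by
    have hle : b * r ^ 2 ≤ Real.exp (b * r ^ 2) := by
      nlinarith [Real.add_one_le_exp (b * r ^ 2)]
    calc E * (b * r ^ 2) ≤ E * Real.exp (b * r ^ 2) := by nlinarith
      _ = 1 := by rw [hE, ← Real.exp_add]; simp
  have hexp : Real.exp (-k * r ^ 2 / (4 * t)) = E * E := by
    rw [hE, ← Real.exp_add]; congr 1; rw [hb]; field_simp; ring
  have step1 : Real.exp (-k * r ^ 2 / (4 * t)) * (c₀ + c₁ * r + c₂ * r ^ 2) ≤ A * E := by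
    rw [hexp]
    have hpoly : c₀ + c₁ * r + c₂ * r ^ 2 ≤ (c₀ + c₁) + (c₁ + c₂) * r ^ 2 := by
      nlinarith [mul_nonneg h1 (sq_nonneg (r - 1))]
    have ha : E * E ≤ E := by nlinarith
    have hb2 : E * E * r ^ 2 ≤ (8 * t / k) * E := by
      have hrv : r ^ 2 = (8 * t / k) * (b * r ^ 2) := by rw [hb]; field_simp
      rw [hrv]
      have h3 : E * (E * (b * r ^ 2)) ≤ E * 1 :=
        mul_le_mul_of_nonneg_left hEv hE0.le
      have h4 : 0 < 8 * t / k := by positivity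
      nlinarith [mul_le_mul_of_nonneg_left h3 h4.le]
    have g1 := mul_le_mul_of_nonneg_left hpoly (mul_nonneg hE0.le hE0.le)
    have g2 := mul_le_mul_of_nonneg_left ha (by linarith : (0:ℝ) ≤ c₀ + c₁)
    have g3 := mul_le_mul_of_nonneg_left hb2 (by linarith : (0:ℝ) ≤ c₁ + c₂)
    rw [hA]
    nlinarith [g1, g2, g3]
  have hN : ‖iotaLat p ω‖ ^ 2 = ∑ i, ((ω i : ℝ)) ^ 2 := norm_iotaLat_sq p hp ω
  have hineq : ‖iotaLat p ω‖ ^ 2 ≤ 2 * r ^ 2 + 2 * ‖x‖ ^ 2 := by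
    have h4 : ‖iotaLat p ω‖ ≤ r + ‖x‖ := by
      have heq : iotaLat p ω = (x + iotaLat p ω) - x := by abel
      rw [heq]
      exact norm_sub_le _ _
    have h5 := pow_le_pow_left₀ (norm_nonneg (iotaLat p ω)) h4 2
    nlinarith [h5, sq_nonneg (r - ‖x‖)]
  have step2 : E ≤ Real.exp (b * ‖x‖ ^ 2) * ∏ i, Real.exp (-(b / 2) * ((ω i : ℝ)) ^ 2) := by
    have hprodeq : ∏ i, Real.exp (-(b / 2) * ((ω i : ℝ)) ^ 2)
        = Real.exp (∑ i, -(b / 2) * ((ω i : ℝ)) ^ 2) := (Real.exp_sum _ _).symm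
    rw [hprodeq, ← Real.exp_add, hE]
    apply Real.exp_le_exp.2
    have hsum : ∑ i, (-(b / 2) * ((ω i : ℝ)) ^ 2) = -(b / 2) * ‖iotaLat p ω‖ ^ 2 := by
      rw [hN, Finset.mul_sum]
    rw [hsum]
    nlinarith [mul_le_mul_of_nonneg_left hineq (by positivity : (0:ℝ) ≤ b / 2)]
  calc Real.exp (-k * r ^ 2 / (4 * t)) * (c₀ + c₁ * r + c₂ * r ^ 2)
      ≤ A * E := step1
    _ ≤ A * (Real.exp (b * ‖x‖ ^ 2) * ∏ i, Real.exp (-(b / 2) * ((ω i : ℝ)) ^ 2)) :=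
        mul_le_mul_of_nonneg_left step2 hA0
    _ = A * Real.exp (b * ‖x‖ ^ 2) * ∏ i, Real.exp (-(b / 2) * ((ω i : ℝ)) ^ 2) := by ring
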